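/- Every weakly stable matching that is not cutoff stable is Pareto-dominated (for the applicants) by some cutoff stable matching. -/

import Mathlib

open Finset

/-- An instance of the two-sided matching problem: applicants `A` with strict preference
lists over acceptable projects, projects `P` with strict preference lists over
acceptable applicants (best first), and capacities. -/
structure MatchInst (A P : Type) where
  prefA : A → List P
  prefP : P → List A
  cap : P → ℕ

variable {A P : Type} [Fintype A] [Fintype P] [DecidableEq A] [DecidableEq P]

/-- number of applicants matched to project `p` -/
def mcount (M : A → Option P) (p : P) : ℕ := (univ.filter fun a => M a = some p).card

/-- counts after adding one extra applicant to project `p` (the matching `M ∪ {(a,p)}`) -/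
def addCount (M : A → Option P) (p : P) : P → ℕ :=
  fun q => mcount M q + if q = p then 1 else 0

/-- the matching `(M ∪ {(a,p)}) \ {(a, M(a))}` -/
def swap (M : A → Option P) (a : A) (p : P) : A → Option P := Function.update M a (some p)

/-- a feasibility function on (anonymous) distributions of applicants over projects,
satisfying the heredity property -/
def Heredity (f : (P → ℕ) → Prop) : Prop :=
  f (fun _ => 0) ∧ ∀ v w : P → ℕ, (∀ p, w p ≤ v p) → f v → f w

namespace MatchInst

variable (I : MatchInst A P)

def accA (a : A) (p : P) : Prop := p ∈ I.prefA a
def accP (p : P) (a : A) : Prop := a ∈ I.prefP p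
/-- rank of project `p` in applicant `a`'s list (0-indexed; lower is better) -/
def rkA (a : A) (p : P) : ℕ := (I.prefA a).idxOf p
/-- rank of applicant `a` in project `p`'s list (0-indexed; lower is better) -/
def rkP (p : P) (a : A) : ℕ := (I.prefP p).idxOf a
/-- score of applicant `a` at project `p`: `|A| - k + 1` if `a` is ranked `k`-th, `0` if unranked -/
def score (p : P) (a : A) : ℕ :=
  if a ∈ I.prefP p then Fintype.card A - (I.prefP p).idxOf a else 0

def IsMatching (M : A → Option P) : Prop :=
  (∀ a p, M a = some p → I.accA a p ∧ I.accP p a) ∧ ∀ p, mcount M p ≤ I.cap p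

/-- `a` strictly prefers project `p` to the assignment `o` (being unmatched is worst) -/
def Prefers (a : A) (p : P) (o : Option P) : Prop :=
  I.accA a p ∧ ∀ q, o = some q → I.rkA a p < I.rkA a q

/-- no justified envy -/
def Fair (M : A → Option P) : Prop :=
  ∀ a p, M a ≠ some p → I.Prefers a p (M a) →
    ∀ a', M a' = some p → I.rkP p a' < I.rkP p a

/-- applicant `a` is admissible at project `p` under cutoffs `d` -/
def Adm (d : P → ℕ) (a : A) (p : P) : Prop :=
  I.accA a p ∧ I.accP p a ∧ d p ≤ I.score p a

/-- cutoffs `d` induce the matching `M`: every applicant is matched to her most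
preferred project where she is admissible (and unmatched if there is none) -/
def Induces (d : P → ℕ) (M : A → Option P) : Prop :=
  ∀ a : A,
    (∀ p, M a = some p → I.Adm d a p ∧ ∀ q, I.Adm d a q → q ≠ p → I.rkA a p < I.rkA a q) ∧
    (M a = none → ∀ p, ¬ I.Adm d a p)

def Blocking (M : A → Option P) (a : A) (p : P) : Prop :=
  I.Prefers a p (M a) ∧
    ((mcount M p < I.cap p ∧ I.accP p a) ∨ ∃ a', M a' = some p ∧ I.rkP p a < I.rkP p a')

def StronglyStable (f : (P → ℕ) → Prop) (M : A → Option P) : Prop :=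
  I.IsMatching M ∧ f (mcount M) ∧
    ∀ a p, I.Blocking M a p →
      (∀ a', M a' = some p → I.rkP p a' < I.rkP p a) ∧ ¬ f (mcount (swap M a p))

/-- weak stability in terms of permitted blocking pairs -/
def WeaklyStableBlk (f : (P → ℕ) → Prop) (M : A → Option P) : Prop :=
  I.IsMatching M ∧ f (mcount M) ∧
    ∀ a p, I.Blocking M a p →
      (∀ a', M a' = some p → I.rkP p a' < I.rkP p a) ∧ ¬ f (addCount M p)

def WeaklyNonWasteful (f : (P → ℕ) → Prop) (M : A → Option P) : Prop :=
  f (mcount M) ∧ ∀ a p, M a ≠ some p → I.accP p a → I.Prefers a p (M a) →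
    ¬ f (addCount M p) ∨ I.cap p ≤ mcount M p

/-- weak stability as fairness plus weak non-wastefulness -/
def WeaklyStable (f : (P → ℕ) → Prop) (M : A → Option P) : Prop :=
  I.IsMatching M ∧ I.Fair M ∧ I.WeaklyNonWasteful f M

def CutoffNonWasteful (f : (P → ℕ) → Prop) (M : A → Option P) : Prop :=
  f (mcount M) ∧ ∀ a p, M a ≠ some p → I.accP p a → I.Prefers a p (M a) →
    ¬ f (mcount (swap M a p)) ∨
    (∃ a', M a' ≠ some p ∧ I.accP p a' ∧ I.rkP p a' < I.rkP p a ∧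
      I.Prefers a' p (M a') ∧ ¬ f (mcount (swap M a' p))) ∨
    I.cap p ≤ mcount M p

def CutoffStable (f : (P → ℕ) → Prop) (M : A → Option P) : Prop :=
  I.IsMatching M ∧ I.Fair M ∧ I.CutoffNonWasteful f M

/-- project `p` is unconstrained for `M`: one more applicant can be added to `p` feasibly -/
def Unconstrained (f : (P → ℕ) → Prop) (M : A → Option P) (p : P) : Prop :=
  f (addCount M p)

/-- cutoffs after decreasing the cutoff of `p` by one -/
def decCut (d : P → ℕ) (p : P) : P → ℕ := Function.update d p (d p - 1)

/-- minimal cutoffs: no cutoff can be decreased keeping the induced matching feasible -/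
def MinimalCutoffs (f : (P → ℕ) → Prop) (d : P → ℕ) : Prop :=
  ∀ p, d p = 0 ∨ ∀ M', I.Induces (decCut d p) M' → ¬ f (mcount M')

def StrictlyBetter (a : A) (o o' : Option P) : Prop :=
  ∃ p, o = some p ∧ I.accA a p ∧ ∀ q, o' = some q → I.rkA a p < I.rkA a q

def ParetoDominates (M' M : A → Option P) : Prop :=
  (∀ a, M' a = M a ∨ I.StrictlyBetter a (M' a) (M a)) ∧
    ∃ a, I.StrictlyBetter a (M' a) (M a)

end MatchInst

section Aux

variable (I : MatchInst A P)

set_option linter.unusedSectionVars false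

lemma swap_same (M : A → Option P) (a : A) (p : P) : swap M a p a = some p :=
  Function.update_self _ _ _

lemma swap_noteq {b a : A} (h : b ≠ a) (M : A → Option P) (p : P) : swap M a p b = M b :=
  Function.update_of_ne h _ _

lemma sb_trans {a : A} {o₁ o₂ o₃ : Option P}
    (h32 : I.StrictlyBetter a o₃ o₂) (h21 : I.StrictlyBetter a o₂ o₁) :
    I.StrictlyBetter a o₃ o₁ := by
  obtain ⟨p3, hp3, hacc3, h3⟩ := h32
  obtain ⟨p2, hp2, hacc2, h2⟩ := h21
  exact ⟨p3, hp3, hacc3, fun q hq => lt_trans (h3 p2 hp2) (h2 q hq)⟩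

lemma pareto_trans {M M' M'' : A → Option P}
    (h2 : I.ParetoDominates M'' M') (h1 : I.ParetoDominates M' M) :
    I.ParetoDominates M'' M := by
  obtain ⟨hall2, a2, ha2⟩ := h2
  obtain ⟨hall1, _⟩ := h1
  constructor
  · intro a
    rcases hall2 a with h | h
    · rw [h]; exact hall1 a
    · rcases hall1 a with h' | h'
      · rw [h'] at h; exact Or.inr h
      · exact Or.inr (sb_trans I h h')
  · rcases hall1 a2 with h' | h'
    · exact ⟨a2, h' ▸ ha2⟩
    · exact ⟨a2, sb_trans I ha2 h'⟩

lemma mcount_swap_self {M : A → Option P} {a : A} {p : P} (h : M a ≠ some p) :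
    mcount (swap M a p) p = mcount M p + 1 := by
  classical
  unfold mcount swap
  have hset : (univ.filter fun b => Function.update M a (some p) b = some p)
      = insert a (univ.filter fun b => M b = some p) := by
    ext b
    by_cases hb : b = a
    · subst hb; simp [Function.update_self]
    · simp [Function.update_of_ne hb, hb]
  rw [hset, card_insert_of_notMem (by simp [h])]

lemma mcount_swap_le {M : A → Option P} {a : A} {p q : P} (hq : q ≠ p) :
    mcount (swap M a p) q ≤ mcount M q := by
  classical
  apply card_le_card
  intro b hb
  simp only [mem_filter, mem_univ, true_and] at hb ⊢
  simp only [swap] at hb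
  by_cases hb' : b = a
  · subst hb'; rw [Function.update_self] at hb
    exact absurd (Option.some.inj hb).symm hq
  · rwa [Function.update_of_ne hb'] at hb

lemma rkP_lt_of_acc {p : P} {a b : A} (ha : I.accP p a) (hb : ¬ I.accP p b) :
    I.rkP p a < I.rkP p b := by
  unfold MatchInst.rkP
  have h1 := List.idxOf_lt_length_iff.2 ha
  have h2 := List.idxOf_eq_length_iff.2 hb
  omega

lemma rkP_eq_iff {p : P} {a b : A} (ha : I.accP p a) (hb : I.accP p b) :
    I.rkP p a = I.rkP p b ↔ a = b :=
  List.idxOf_inj ha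

/-- measure for termination: total rank of assignments -/
def measureM (M : A → Option P) : ℕ :=
  ∑ a : A, (M a).elim (I.prefA a).length (fun p => I.rkA a p)

lemma step_lemma (f : (P → ℕ) → Prop) (M : A → Option P)
    (hM : I.IsMatching M) (hfair : I.Fair M) (hfM : f (mcount M))
    (hnc : ¬ I.CutoffNonWasteful f M) :
    ∃ M', I.IsMatching M' ∧ I.Fair M' ∧ f (mcount M') ∧ I.ParetoDominates M' M ∧
      measureM I M' < measureM I M := by
  classical
  unfold MatchInst.CutoffNonWasteful at hnc
  push_neg at hnc
  obtain ⟨a, p, hne, hacc, hpref, hD1, hD2, hD3⟩ := hnc hfM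
  -- candidate set
  set S : Finset A := univ.filter
      (fun a' => M a' ≠ some p ∧ I.accP p a' ∧ I.Prefers a' p (M a')) with hS
  have haS : a ∈ S := by simp [hS, hne, hacc, hpref]
  obtain ⟨b, hbS, hbmin⟩ := S.exists_min_image (I.rkP p) ⟨a, haS⟩
  simp only [hS, mem_filter, mem_univ, true_and] at hbS
  obtain ⟨h1, h2, h3⟩ := hbS
  -- feasibility of the swap at b
  have hfswap : f (mcount (swap M b p)) := by
    by_cases hba : b = a
    · subst hba; exact hD1
    · have hle : I.rkP p b ≤ I.rkP p a := hbmin a haS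
      have hlt : I.rkP p b < I.rkP p a := by
        rcases lt_or_eq_of_le hle with h | h
        · exact h
        · exact absurd ((rkP_eq_iff I h2 hacc).1 h) hba
      exact hD2 b h1 h2 hlt h3
  refine ⟨swap M b p, ?_, ?_, hfswap, ?_, ?_⟩
  · -- IsMatching
    constructor
    · intro c q hcq
      by_cases hc : c = b
      · subst hc
        rw [swap_same M c p] at hcq
        obtain rfl := Option.some.inj hcq
        exact ⟨h3.1, h2⟩
      · rw [swap_noteq hc M p] at hcq
        exact hM.1 c q hcq
    · intro q
      by_cases hq : q = p
      · subst hq; rw [mcount_swap_self h1]; omega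
      · exact le_trans (mcount_swap_le hq) (hM.2 q)
  · -- Fair
    intro c q hcq hcpref b' hb'
    by_cases hc : c = b
    · subst hc
      rw [swap_same M c p] at hcq hcpref
      have hqp : q ≠ p := fun h => hcq (by rw [h])
      have hlt : I.rkA c q < I.rkA c p := hcpref.2 p rfl
      have hb'b : b' ≠ c := by
        intro h; subst h
        rw [swap_same] at hb'
        exact hqp (Option.some.inj hb').symm
      rw [swap_noteq hb'b M p] at hb'
      have hMcq : M c ≠ some q := by
        intro h
        exact absurd (h3.2 q h) (not_lt.2 (le_of_lt hlt))
      exact hfair c q hMcq ⟨hcpref.1, fun r hr => lt_trans hlt (h3.2 r hr)⟩ b' hb'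
    · rw [swap_noteq hc M p] at hcq hcpref
      by_cases hb'b : b' = b
      · subst hb'b
        rw [swap_same] at hb'
        obtain rfl := Option.some.inj hb'
        by_cases haccc : I.accP p c
        · have hcS : c ∈ S := by simp [hS, hcq, haccc, hcpref]
          have hle : I.rkP p b' ≤ I.rkP p c := hbmin c hcS
          rcases lt_or_eq_of_le hle with h | h
          · exact h
          · exact absurd ((rkP_eq_iff I h2 haccc).1 h) (Ne.symm hc)
        · exact rkP_lt_of_acc I h2 haccc
      · rw [swap_noteq hb'b M p] at hb'
        exact hfair c q hcq hcpref b' hb'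
  · -- ParetoDominates
    have hsb : I.StrictlyBetter b (swap M b p b) (M b) :=
      ⟨p, swap_same M b p, h3.1, fun q hq => h3.2 q hq⟩
    refine ⟨fun c => ?_, b, hsb⟩
    by_cases hc : c = b
    · subst hc; exact Or.inr hsb
    · exact Or.inl (swap_noteq hc M p)
  · -- measure decreases
    apply Finset.sum_lt_sum
    · intro c _
      by_cases hc : c = b
      · subst hc
        rw [swap_same M c p]
        cases hMc : M c with
        | none =>
          simp only [Option.elim]
          exact le_of_lt (List.idxOf_lt_length_iff.2 h3.1)
        | some r =>
          simp only [Option.elim]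
          exact le_of_lt (h3.2 r hMc)
      · rw [swap_noteq hc M p]
    · refine ⟨b, mem_univ b, ?_⟩
      rw [swap_same]
      cases hMb : M b with
      | none =>
        simp only [Option.elim]
        exact List.idxOf_lt_length_iff.2 h3.1
      | some r =>
        simp only [Option.elim]
        exact h3.2 r hMb

lemma main_lemma (f : (P → ℕ) → Prop) :
    ∀ n (M : A → Option P), measureM I M ≤ n →
      I.IsMatching M → I.Fair M → f (mcount M) →
      ∃ M', I.CutoffStable f M' ∧ (M' = M ∨ I.ParetoDominates M' M) := by
  intro n
  induction n with
  | zero =>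
    intro M hm hM hfair hfM
    by_cases hc : I.CutoffNonWasteful f M
    · exact ⟨M, ⟨hM, hfair, hc⟩, Or.inl rfl⟩
    · obtain ⟨M₁, _, _, _, _, hlt⟩ := step_lemma I f M hM hfair hfM hc
      omega
  | succ n ih =>
    intro M hm hM hfair hfM
    by_cases hc : I.CutoffNonWasteful f M
    · exact ⟨M, ⟨hM, hfair, hc⟩, Or.inl rfl⟩
    · obtain ⟨M₁, hM₁, hfair₁, hfM₁, hdom₁, hlt⟩ := step_lemma I f M hM hfair hfM hc
      obtain ⟨M', hcs, hdom⟩ := ih M₁ (by omega) hM₁ hfair₁ hfM₁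
      refine ⟨M', hcs, Or.inr ?_⟩
      rcases hdom with rfl | hdom
      · exact hdom₁
      · exact pareto_trans I hdom hdom₁

end Aux

/-- Every weakly stable matching that is not cutoff stable is
Pareto-dominated (for the applicants) by some cutoff stable matching. -/

theorem weaklyStable_not_cutoffStable_dominated
    (I : MatchInst A P) (f : (P → ℕ) → Prop) (M : A → Option P)
    (hA : ∀ a, (I.prefA a).Nodup) (hP : ∀ p, (I.prefP p).Nodup)
    (hf : Heredity f)
    (hws : I.WeaklyStable f M) (hncs : ¬ I.CutoffStable f M) :
    ∃ M' : A → Option P, I.CutoffStable f M' ∧ I.ParetoDominates M' M := by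
  classical
  obtain ⟨hM, hfair, hfM, _⟩ := hws
  have hnc : ¬ I.CutoffNonWasteful f M := fun h => hncs ⟨hM, hfair, h⟩
  obtain ⟨M₁, hM₁, hfair₁, hfM₁, hdom₁, _⟩ := step_lemma I f M hM hfair hfM hnc
  obtain ⟨M', hcs, hdom⟩ := main_lemma I f (measureM I M₁) M₁ le_rfl hM₁ hfair₁ hfM₁
  refine ⟨M', hcs, ?_⟩
  rcases hdom with rfl | hdom
  · exact hdom₁
  · exact pareto_trans I hdom hdom₁
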